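/- Let ReLU neural network functions be given and let F : ℝ² → ℝ^{2n+2} → ℝ be defined by first layer weights (w_j, b_j) = (sin(πj/(n+1)), cos(πj/(n+1)); −1) for j = 1,…,2n+2 and second layer weights (−1, 1, −1, …, 1, −1) with zero bias. Then the origin-containing cell C (the regular (2n+2)-gon where all neurons are inactive) satisfies F(C) = {0}, and for sufficiently small ε > 0 and N(C) a disc of radius r with 1 < r < 1/cos(π/(n+1)) centered at the origin, F⁻¹((−∞,−ε]) ∩ N(C) has exactly n+1 connected components while F⁻¹((−∞,ε]) ∩ N(C) is connected. -/

import Mathlib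

open scoped RealInnerProductSpace
open Set Real

noncomputable section

abbrev E2 := EuclideanSpace ℝ (Fin 2)

/-- First-layer preactivation of the j-th neuron: the tangent line to the unit
circle at angle π(j+1)/(n+1), co-oriented outward, with bias −1. -/
def preact (n : ℕ) (j : Fin (2 * n + 2)) (x : E2) : ℝ :=
  Real.sin (Real.pi * ((j : ℕ) + 1) / (n + 1)) * x 0 +
    Real.cos (Real.pi * ((j : ℕ) + 1) / (n + 1)) * x 1 - 1

/-- The depth-2 ReLU network with alternating second-layer weights (−1,1,…,1,−1). -/
def netF (n : ℕ) (x : E2) : ℝ :=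
  ∑ j : Fin (2 * n + 2), (-1 : ℝ) ^ ((j : ℕ) + 1) * max 0 (preact n j x)

/-- The central flat cell: the regular (2n+2)-gon on which every neuron is inactive. -/
def centralCell (n : ℕ) : Set E2 := {x | ∀ j : Fin (2 * n + 2), preact n j x ≤ 0}

namespace LCE

/-- mod facts usable by omega -/
lemma mod_cases (a m : ℕ) (hm : 0 < m) (h : a < 2*m) : (a % m = a ∧ a < m) ∨ (a % m = a - m ∧ m ≤ a) := by
  rcases lt_or_ge a m with h'|h'
  · exact Or.inl ⟨Nat.mod_eq_of_lt h', h'⟩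
  · right
    refine ⟨?_, h'⟩
    rw [Nat.mod_eq_sub_mod h', Nat.mod_eq_of_lt (by omega)]

lemma val_one (n : ℕ) : ((1 : Fin (2*n+2)) : ℕ) = 1 := by
  rw [show ((1 : Fin (2*n+2)) : ℕ) = 1 % (2*n+2) from rfl]
  exact Nat.mod_eq_of_lt (by omega)

lemma val_succ (n : ℕ) (j : Fin (2*n+2)) : ((j+1 : Fin (2*n+2)) : ℕ) = ((j : ℕ) + 1) % (2*n+2) := by
  simp [Fin.add_def, val_one]

lemma val_pred (n : ℕ) (j : Fin (2*n+2)) : ((j-1 : Fin (2*n+2)) : ℕ) = (2*n+1 + (j : ℕ)) % (2*n+2) := by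
  rw [Fin.sub_def]
  rfl

lemma val_succ_cases (n : ℕ) (j : Fin (2*n+2)) :
    (((j+1 : Fin (2*n+2)) : ℕ) = (j : ℕ)+1 ∧ (j : ℕ) < 2*n+1) ∨
      (((j+1 : Fin (2*n+2)) : ℕ) = 0 ∧ (j : ℕ) = 2*n+1) := by
  have h1 := val_succ n j
  have hj := j.isLt
  rcases mod_cases ((j:ℕ)+1) (2*n+2) (by omega) (by omega) with m|m
  · left; omega
  · right; omega

lemma val_pred_cases (n : ℕ) (j : Fin (2*n+2)) :
    ((j-1 : Fin (2*n+2)) : ℕ) = (j : ℕ) - 1 ∧ 1 ≤ (j : ℕ) ∨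
      (((j-1 : Fin (2*n+2)) : ℕ) = 2*n+1 ∧ (j : ℕ) = 0) := by
  have h1 := val_pred n j
  have hj := j.isLt
  rcases mod_cases (2*n+1+(j:ℕ)) (2*n+2) (by omega) (by omega) with m|m
  · right; omega
  · left; omega

lemma succ_ne (n : ℕ) (j : Fin (2*n+2)) : j + 1 ≠ j := by
  have h1 := val_succ_cases n j
  have h2 := j.isLt
  intro h; rw [Fin.ext_iff] at h
  generalize hs : ((j + 1 : Fin (2*n+2)) : ℕ) = sv at h1 h
  clear hs
  omega

lemma pred_ne (n : ℕ) (j : Fin (2*n+2)) : j - 1 ≠ j := by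
  have h1 := val_pred_cases n j
  have h2 := j.isLt
  intro h; rw [Fin.ext_iff] at h
  generalize hs : ((j - 1 : Fin (2*n+2)) : ℕ) = pv at h1 h
  clear hs
  omega

lemma pred_ne_succ (n : ℕ) (hn : 1 ≤ n) (j : Fin (2*n+2)) : j - 1 ≠ j + 1 := by
  have h1 := val_pred_cases n j
  have h2 := j.isLt
  have h3 := val_succ_cases n j
  intro h; rw [Fin.ext_iff] at h
  generalize hs : ((j - 1 : Fin (2*n+2)) : ℕ) = pv at h1 h
  generalize hs' : ((j + 1 : Fin (2*n+2)) : ℕ) = sv at h3 h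
  clear hs hs'
  omega

lemma val_pred_parity (n : ℕ) (j : Fin (2*n+2)) : ((j-1 : Fin (2*n+2)) : ℕ) % 2 = ((j:ℕ)+1) % 2 := by
  have h1 := val_pred_cases n j
  have h2 := j.isLt
  generalize hs : ((j - 1 : Fin (2*n+2)) : ℕ) = pv at h1 ⊢
  clear hs
  omega

lemma val_succ_parity (n : ℕ) (j : Fin (2*n+2)) : ((j+1 : Fin (2*n+2)) : ℕ) % 2 = ((j:ℕ)+1) % 2 := by
  have h1 := val_succ_cases n j
  have h2 := j.isLt
  generalize hs : ((j + 1 : Fin (2*n+2)) : ℕ) = sv at h1 ⊢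
  clear hs
  omega

lemma sign_eval (k : ℕ) : (-1 : ℝ) ^ (k+1) = if k % 2 = 0 then -1 else 1 := by
  rcases Nat.even_or_odd k with h|h
  · rw [if_pos (Nat.even_iff.mp h), (h.add_one).neg_one_pow]
  · rw [if_neg (by simpa using Nat.odd_iff.mp h), (h.add_one).neg_one_pow]

/-- scaling: max 0 (t*(p+1)-1) ≤ max 0 p for t ∈ [0,1] -/
lemma max0_scale {t p : ℝ} (ht0 : 0 ≤ t) (ht1 : t ≤ 1) : max 0 (t*(p+1)-1) ≤ max 0 p := by
  rcases le_total (p+1) 0 with h|h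
  · have : t*(p+1) ≤ 0 := mul_nonpos_of_nonneg_of_nonpos ht0 h
    exact max_le (le_max_left _ _) (by nlinarith [le_max_left 0 p])
  · have : t*(p+1) ≤ p+1 := by nlinarith
    exact max_le (le_max_left _ _) (le_trans (by linarith) (le_max_right 0 p))

lemma gbound {a₀ a₁ t : ℝ} (h0 : 1 < a₀) (ht0 : 0 ≤ t) (ht1 : t ≤ 1) :
    max 0 (t*a₁-1) - max 0 (t*a₀-1) ≤ max 0 (a₁-a₀) := by
  rcases le_total (t*a₁) 1 with h|h
  · have : max 0 (t*a₁-1) = 0 := max_eq_left (by linarith)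
    rw [this]
    have : 0 ≤ max 0 (t*a₀-1) := le_max_left _ _
    have : 0 ≤ max 0 (a₁-a₀) := le_max_left _ _
    linarith
  · rcases le_total a₁ a₀ with h'|h'
    · have : max 0 (t*a₁-1) ≤ max 0 (t*a₀-1) := max_le_max le_rfl (by nlinarith)
      have : 0 ≤ max 0 (a₁-a₀) := le_max_left _ _
      linarith
    · have hR : max 0 (a₁-a₀) = a₁-a₀ := max_eq_right (by linarith)
      rcases le_total (t*a₀) 1 with h''|h''
      · have h1 : max 0 (t*a₀-1) = 0 := max_eq_left (by linarith)
        have h2 : max 0 (t*a₁-1) = t*a₁-1 := max_eq_right (by linarith)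
        rw [hR, h1, h2]; nlinarith
      · have h1 : max 0 (t*a₀-1) = t*a₀-1 := max_eq_right (by linarith)
        have h2 : max 0 (t*a₁-1) = t*a₁-1 := max_eq_right (by linarith)
        rw [hR, h1, h2]; nlinarith

lemma max0_comb {a b u v : ℝ} (ha : 0 ≤ a) (hb : 0 ≤ b) :
    max 0 (a*u + b*v) ≤ a * max 0 u + b * max 0 v := by
  refine max_le (by positivity) ?_
  have h1 : a*u ≤ a * max 0 u := mul_le_mul_of_nonneg_left (le_max_right _ _) ha
  have h2 : b*v ≤ b * max 0 v := mul_le_mul_of_nonneg_left (le_max_right _ _) hb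
  linarith


lemma cos_gap1 (n k : ℕ) (h2 : 2 ≤ k) (hk : (k:ℝ) ≤ (n:ℝ)+1) :
    Real.cos (Real.pi * k / ((n:ℝ)+1)) ≤ Real.cos (2*Real.pi/((n:ℝ)+1)) := by
  have hN : (0:ℝ) < (n:ℝ)+1 := by positivity
  have hk2 : (2:ℝ) ≤ (k:ℝ) := by exact_mod_cast h2
  apply Real.cos_le_cos_of_nonneg_of_le_pi
  · positivity
  · rw [div_le_iff₀ hN]; nlinarith [Real.pi_pos]
  · rw [div_le_div_iff₀ hN hN]
    nlinarith [mul_nonneg (mul_nonneg (le_of_lt Real.pi_pos)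
      (by linarith : (0:ℝ) ≤ (k:ℝ)-2)) (le_of_lt hN)]

lemma cos_gap (n : ℕ) (k : ℕ) (h2 : 2 ≤ k) (hk : k ≤ 2*n) :
    Real.cos (Real.pi * k / ((n:ℝ)+1)) ≤ Real.cos (2*Real.pi/((n:ℝ)+1)) := by
  have hN : (0:ℝ) < (n:ℝ)+1 := by positivity
  rcases le_total k (n+1) with h|h
  · exact cos_gap1 n k h2 (by exact_mod_cast h)
  · have e : Real.pi * k / ((n:ℝ)+1) = 2*Real.pi - Real.pi * ((2*n+2-k : ℕ):ℝ)/((n:ℝ)+1) := by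
      rw [Nat.cast_sub (by omega)]
      push_cast
      field_simp
      ring
    rw [e, Real.cos_two_pi_sub]
    refine cos_gap1 n (2*n+2-k) (by omega) ?_
    rw [Nat.cast_sub (by omega)]
    push_cast
    have : ((n:ℝ))+1 ≤ (k:ℝ) := by exact_mod_cast h
    linarith

lemma n_ge (n : ℕ) (hc : 0 < Real.cos (Real.pi/((n:ℝ)+1))) : 2 ≤ n := by
  by_contra h
  push_neg at h
  interval_cases n
  · norm_num [Real.cos_pi] at hc
  · rw [show ((1:ℕ):ℝ) + 1 = 2 by norm_num, Real.cos_pi_div_two] at hc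
    exact lt_irrefl 0 hc

set_option maxHeartbeats 1000000 in
lemma adjacency (n : ℕ) (hc : 0 < Real.cos (Real.pi/((n:ℝ)+1))) {r : ℝ} (hr1 : 1 < r)
    (hrc : r * Real.cos (Real.pi/((n:ℝ)+1)) < 1) {x : E2} (hx : (x 0)^2 + (x 1)^2 ≤ r^2)
    {i j : Fin (2*n+2)} (hij : i ≠ j) (hi : 0 < preact n i x) (hj : 0 < preact n j x) :
    (((i:ℕ):ℤ) - ((j:ℕ):ℤ)).natAbs = 1 ∨ (((i:ℕ):ℤ) - ((j:ℕ):ℤ)).natAbs = 2*n+1 := by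
  have hN : (0:ℝ) < (n:ℝ)+1 := by positivity
  set c := Real.cos (Real.pi/((n:ℝ)+1)) with hcdef
  simp only [preact] at hi hj
  set a := Real.pi * (((i:ℕ):ℝ) + 1) / ((n:ℝ)+1) with ha
  set b := Real.pi * (((j:ℕ):ℝ) + 1) / ((n:ℝ)+1) with hb
  have h2 : 2 < (Real.sin a + Real.sin b) * x 0 + (Real.cos a + Real.cos b) * x 1 := by
    ring_nf
    ring_nf at hi hj
    linarith
  have hpa := Real.sin_sq_add_cos_sq a
  have hpb := Real.sin_sq_add_cos_sq b
  have hsum : (Real.sin a + Real.sin b)^2 + (Real.cos a + Real.cos b)^2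
      = 2 + 2*Real.cos (a-b) := by
    rw [Real.cos_sub]; nlinarith
  have hid : ((Real.sin a + Real.sin b) * x 0 + (Real.cos a + Real.cos b) * x 1)^2
      + ((Real.sin a + Real.sin b) * x 1 - (Real.cos a + Real.cos b) * x 0)^2
      = ((Real.sin a + Real.sin b)^2 + (Real.cos a + Real.cos b)^2) * ((x 0)^2 + (x 1)^2) := by
    ring
  have hSpos : (0:ℝ) ≤ 2 + 2*Real.cos (a-b) := by nlinarith [Real.neg_one_le_cos (a-b)]
  have hmul : (2 + 2*Real.cos (a-b)) * ((x 0)^2 + (x 1)^2) ≤ (2 + 2*Real.cos (a-b)) * r^2 :=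
    mul_le_mul_of_nonneg_left hx hSpos
  have h4 : 4 < (2 + 2*Real.cos (a-b)) * r^2 := by
    rw [hsum] at hid
    nlinarith [sq_nonneg ((Real.sin a + Real.sin b) * x 1 - (Real.cos a + Real.cos b) * x 0)]
  have hrc2 : (r*c)^2 < 1 := by
    have h0 : (0:ℝ) < r*c := mul_pos (by linarith) hc
    have h1 := mul_lt_mul'' hrc hrc h0.le h0.le
    rw [sq]; linarith
  have hkey : Real.cos (2*Real.pi/((n:ℝ)+1)) < Real.cos (a-b) := by
    have h2c : Real.cos (2*Real.pi/((n:ℝ)+1)) = 2*c^2 - 1 := by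
      rw [show 2*Real.pi/((n:ℝ)+1) = 2*(Real.pi/((n:ℝ)+1)) by ring, Real.cos_two_mul]
    rw [h2c]
    by_contra hcon
    push_neg at hcon
    have e1 : (2 + 2*Real.cos (a-b)) * r^2 ≤ (4*c^2) * r^2 :=
      mul_le_mul_of_nonneg_right (by linarith) (sq_nonneg r)
    have e2 : (4*c^2) * r^2 = 4*(r*c)^2 := by ring
    linarith
  set d : ℤ := ((i:ℕ):ℤ) - ((j:ℕ):ℤ) with hd
  have hdne : d ≠ 0 := by
    simp only [hd, sub_ne_zero]
    exact_mod_cast fun h => hij (Fin.ext (by exact_mod_cast h))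
  have hcosk : Real.cos (a-b) = Real.cos (Real.pi*(d.natAbs:ℝ)/((n:ℝ)+1)) := by
    have hab : a - b = Real.pi * ((d:ℤ):ℝ)/((n:ℝ)+1) := by
      rw [ha, hb, hd]; push_cast; field_simp; ring
    have habs : |Real.pi * ((d:ℤ):ℝ)/((n:ℝ)+1)| = Real.pi*(d.natAbs:ℝ)/((n:ℝ)+1) := by
      rw [abs_div, abs_mul, abs_of_pos Real.pi_pos, abs_of_pos hN, Nat.cast_natAbs, Int.cast_abs]
    rw [hab,
      show Real.cos (Real.pi * ((d:ℤ):ℝ)/((n:ℝ)+1))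
        = Real.cos |Real.pi * ((d:ℤ):ℝ)/((n:ℝ)+1)| from (Real.cos_abs _).symm,
      habs]
  by_contra hcon
  push_neg at hcon
  have hlt := i.isLt
  have hlt' := j.isLt
  have := cos_gap n d.natAbs (by omega) (by omega)
  rw [hcosk] at hkey
  linarith

lemma fin_adj (n : ℕ) {j k : Fin (2*n+2)}
    (h : (((k:ℕ):ℤ) - ((j:ℕ):ℤ)).natAbs = 1 ∨ (((k:ℕ):ℤ) - ((j:ℕ):ℤ)).natAbs = 2*n+1) :
    k = j + 1 ∨ k = j - 1 := by
  have h1 := val_succ_cases n j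
  have h2 := val_pred_cases n j
  have hk := k.isLt
  have hj := j.isLt
  simp only [Fin.ext_iff]
  generalize hs : ((j + 1 : Fin (2*n+2)) : ℕ) = sv at h1 ⊢
  generalize hp : ((j - 1 : Fin (2*n+2)) : ℕ) = pv at h2 ⊢
  clear hs hp
  rcases h with h|h <;> omega

lemma inactive_outside (n : ℕ) (hc : 0 < Real.cos (Real.pi/((n:ℝ)+1))) {r : ℝ} (hr1 : 1 < r)
    (hrc : r * Real.cos (Real.pi/((n:ℝ)+1)) < 1) {x : E2} (hx : (x 0)^2 + (x 1)^2 ≤ r^2)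
    {j : Fin (2*n+2)} (hj : 0 < preact n j x) :
    ∀ k : Fin (2*n+2), k ≠ j - 1 → k ≠ j → k ≠ j + 1 → preact n k x ≤ 0 := by
  intro k h1 h2 h3
  by_contra h
  push_neg at h
  rcases fin_adj n (adjacency n hc hr1 hrc hx h2 h hj) with h'|h'
  exacts [h3 h', h1 h']

lemma sum_three (n : ℕ) (hn : 2 ≤ n) (x : E2) (j : Fin (2*n+2))
    (hout : ∀ k : Fin (2*n+2), k ≠ j - 1 → k ≠ j → k ≠ j + 1 → preact n k x ≤ 0) :
    netF n x = (-1:ℝ)^(((j-1 : Fin (2*n+2)):ℕ)+1) * max 0 (preact n (j-1) x)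
      + (-1:ℝ)^(((j:ℕ))+1) * max 0 (preact n j x)
      + (-1:ℝ)^(((j+1 : Fin (2*n+2)):ℕ)+1) * max 0 (preact n (j+1) x) := by
  have hd1 : j - 1 ≠ j := pred_ne n j
  have hd2 : j - 1 ≠ j + 1 := pred_ne_succ n (by omega) j
  have hd3 : j ≠ j + 1 := (succ_ne n j).symm
  have hzero : ∀ k ∈ (Finset.univ : Finset (Fin (2*n+2))),
      k ∉ ({j-1, j, j+1} : Finset (Fin (2*n+2))) →
      (-1:ℝ)^((k:ℕ)+1) * max 0 (preact n k x) = 0 := by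
    intro k _ hk
    simp only [Finset.mem_insert, Finset.mem_singleton, not_or] at hk
    rw [max_eq_left (hout k hk.1 hk.2.1 hk.2.2), mul_zero]
  rw [netF, ← Finset.sum_subset (Finset.subset_univ ({j-1, j, j+1} : Finset (Fin (2*n+2)))) hzero,
    Finset.sum_insert (by simp [hd1, hd2]), Finset.sum_insert (by simp [hd3]),
    Finset.sum_singleton]
  ring

lemma formula_even (n : ℕ) (hn : 2 ≤ n) (x : E2) (j : Fin (2*n+2)) (hpar : (j:ℕ) % 2 = 0)
    (hout : ∀ k : Fin (2*n+2), k ≠ j - 1 → k ≠ j → k ≠ j + 1 → preact n k x ≤ 0) :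
    netF n x = max 0 (preact n (j-1) x) - max 0 (preact n j x) + max 0 (preact n (j+1) x) := by
  have e1 : (-1:ℝ)^(((j-1 : Fin (2*n+2)):ℕ)+1) = 1 := by
    rw [sign_eval, if_neg]
    have := val_pred_parity n j
    omega
  have e2 : (-1:ℝ)^(((j:ℕ))+1) = -1 := by rw [sign_eval, if_pos hpar]
  have e3 : (-1:ℝ)^(((j+1 : Fin (2*n+2)):ℕ)+1) = 1 := by
    rw [sign_eval, if_neg]
    have := val_succ_parity n j
    omega
  rw [sum_three n hn x j hout, e1, e2, e3]
  ring

lemma preact_smul (n : ℕ) (k : Fin (2*n+2)) (t : ℝ) (x : E2) :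
    preact n k (t • x) = t * (preact n k x + 1) - 1 := by
  simp only [preact, PiLp.smul_apply, smul_eq_mul]
  ring

lemma max0_preact_smul (n : ℕ) (k : Fin (2*n+2)) {t : ℝ} (ht0 : 0 ≤ t) (ht1 : t ≤ 1) (x : E2) :
    max 0 (preact n k (t • x)) ≤ max 0 (preact n k x) := by
  rw [preact_smul]
  exact max0_scale ht0 ht1

lemma preact_smul_nonpos (n : ℕ) (k : Fin (2*n+2)) {t : ℝ} (ht0 : 0 ≤ t) (ht1 : t ≤ 1) {x : E2}
    (h : preact n k x ≤ 0) : preact n k (t • x) ≤ 0 := by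
  have h1 : max 0 (preact n k (t • x)) ≤ 0 := by
    calc max 0 (preact n k (t • x)) ≤ max 0 (preact n k x) := max0_preact_smul n k ht0 ht1 x
    _ = 0 := max_eq_left h
  exact le_trans (le_max_right 0 _) h1

lemma ball_sq {r : ℝ} (hr : 0 ≤ r) {x : E2} (hx : x ∈ Metric.closedBall (0:E2) r) :
    (x 0)^2 + (x 1)^2 ≤ r^2 := by
  rw [Metric.mem_closedBall, dist_zero_right] at hx
  have h1 : ‖x‖^2 ≤ r^2 := by nlinarith [norm_nonneg x]
  have h2 : ‖x‖^2 = (x 0)^2 + (x 1)^2 := by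
    rw [EuclideanSpace.norm_eq, Real.sq_sqrt (by positivity)]
    simp [Fin.sum_univ_two, Real.norm_eq_abs, sq_abs]
  linarith

lemma netF_zero (n : ℕ) : netF n 0 = 0 := by
  rw [netF]
  apply Finset.sum_eq_zero
  intro k _
  have h : preact n k 0 = -1 := by
    simp [preact]
  rw [h, max_eq_left (by norm_num), mul_zero]

set_option maxHeartbeats 1000000 in
lemma star_bound (n : ℕ) (hc : 0 < Real.cos (Real.pi/((n:ℝ)+1))) {r : ℝ} (hr1 : 1 < r)
    (hrc : r * Real.cos (Real.pi/((n:ℝ)+1)) < 1) {x : E2} (hx : (x 0)^2 + (x 1)^2 ≤ r^2)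
    {t : ℝ} (ht0 : 0 ≤ t) (ht1 : t ≤ 1) :
    netF n (t • x) ≤ max 0 (netF n x) := by
  have hn : 2 ≤ n := n_ge n hc
  by_cases hE : ∃ j : Fin (2*n+2), (j:ℕ) % 2 = 0 ∧ 0 < preact n j x
  · obtain ⟨j, hjpar, hjact⟩ := hE
    have hout := inactive_outside n hc hr1 hrc hx hjact
    have houtt : ∀ k : Fin (2*n+2), k ≠ j - 1 → k ≠ j → k ≠ j + 1 → preact n k (t • x) ≤ 0 :=
      fun k a b c => preact_smul_nonpos n k ht0 ht1 (hout k a b c)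
    have hfx := formula_even n hn x j hjpar hout
    have hftx := formula_even n hn (t • x) j hjpar houtt
    have hPj : max 0 (preact n j x) = preact n j x := max_eq_right hjact.le
    by_cases hR : 0 < preact n (j+1) x
    · have hLnp : preact n (j-1) x ≤ 0 := by
        by_contra hL
        push_neg at hL
        have hne : (j+1 : Fin (2*n+2)) ≠ j - 1 := (pred_ne_succ n (by omega) j).symm
        have p1 := val_succ_parity n j
        have p2 := val_pred_parity n j
        rcases adjacency n hc hr1 hrc hx hne hR hL with h|h <;>
          (generalize hs : ((j + 1 : Fin (2*n+2)) : ℕ) = sv at p1 h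
           generalize hp : ((j - 1 : Fin (2*n+2)) : ℕ) = pv at p2 h
           clear hs hp
           omega)
      have hzL : max 0 (preact n (j-1) x) = 0 := max_eq_left hLnp
      have hzLt : max 0 (preact n (j-1) (t•x)) = 0 :=
        max_eq_left (preact_smul_nonpos n _ ht0 ht1 hLnp)
      have hg := gbound (a₀ := preact n j x + 1) (a₁ := preact n (j+1) x + 1)
        (by linarith) ht0 ht1
      have hfx' : netF n x = (preact n (j+1) x + 1) - (preact n j x + 1) := by
        rw [hfx, hzL, hPj, max_eq_right hR.le]; ring
      rw [hftx, hzLt, preact_smul, preact_smul]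
      calc 0 - max 0 (t * (preact n j x + 1) - 1) + max 0 (t * (preact n (j+1) x + 1) - 1)
          ≤ max 0 ((preact n (j+1) x + 1) - (preact n j x + 1)) := by linarith
        _ = max 0 (netF n x) := by rw [hfx']
    · push_neg at hR
      have hzR : max 0 (preact n (j+1) x) = 0 := max_eq_left hR
      have hzRt : max 0 (preact n (j+1) (t•x)) = 0 :=
        max_eq_left (preact_smul_nonpos n _ ht0 ht1 hR)
      by_cases hL : 0 < preact n (j-1) x
      · have hg := gbound (a₀ := preact n j x + 1) (a₁ := preact n (j-1) x + 1)
          (by linarith) ht0 ht1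
        have hfx' : netF n x = (preact n (j-1) x + 1) - (preact n j x + 1) := by
          rw [hfx, hzR, hPj, max_eq_right hL.le]; ring
        rw [hftx, hzRt, preact_smul, preact_smul]
        calc max 0 (t * (preact n (j-1) x + 1) - 1) - max 0 (t * (preact n j x + 1) - 1) + 0
            ≤ max 0 ((preact n (j-1) x + 1) - (preact n j x + 1)) := by linarith
          _ = max 0 (netF n x) := by rw [hfx']
      · push_neg at hL
        have hzLt : max 0 (preact n (j-1) (t•x)) = 0 :=
          max_eq_left (preact_smul_nonpos n _ ht0 ht1 hL)
        rw [hftx, hzLt, hzRt]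
        have h1 : 0 ≤ max 0 (preact n j (t•x)) := le_max_left _ _
        have h2 : 0 ≤ max 0 (netF n x) := le_max_left _ _
        linarith
  · push_neg at hE
    have hle : netF n (t • x) ≤ netF n x := by
      rw [netF, netF]
      apply Finset.sum_le_sum
      intro k _
      rcases Nat.even_or_odd (k:ℕ) with hp|hp
      · rw [sign_eval, if_pos (Nat.even_iff.mp hp)]
        have h0 : preact n k x ≤ 0 := hE k (Nat.even_iff.mp hp)
        rw [max_eq_left h0]
        have := le_max_left 0 (preact n k (t • x))
        nlinarith
      · rw [Nat.odd_iff] at hp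
        rw [sign_eval, if_neg (by omega)]
        simp only [one_mul]
        exact max0_preact_smul n k ht0 ht1 x
    exact le_trans hle (le_max_right 0 _)

def jdx (n : ℕ) (m : Fin (n+1)) : Fin (2*n+2) := ⟨2*(m:ℕ), by omega⟩

def cap (n : ℕ) (ε r : ℝ) (m : Fin (n+1)) : Set E2 :=
  {x : E2 | ε ≤ preact n (jdx n m) x - max 0 (preact n (jdx n m - 1) x)
      - max 0 (preact n (jdx n m + 1) x)} ∩ Metric.closedBall (0:E2) r

lemma preact_affine (n : ℕ) (k : Fin (2*n+2)) {a b : ℝ} (hab : a + b = 1) (x y : E2) :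
    preact n k (a • x + b • y) = a * preact n k x + b * preact n k y := by
  simp only [preact, PiLp.add_apply, PiLp.smul_apply, smul_eq_mul]
  linear_combination hab

lemma cap_convex (n : ℕ) (ε r : ℝ) (m : Fin (n+1)) : Convex ℝ (cap n ε r m) := by
  apply Convex.inter ?_ (convex_closedBall _ _)
  intro x hx y hy a b ha hb hab
  simp only [mem_setOf_eq] at hx hy ⊢
  rw [preact_affine n _ hab, preact_affine n _ hab, preact_affine n _ hab]
  have h1 := max0_comb (u := preact n (jdx n m - 1) x) (v := preact n (jdx n m - 1) y) ha hb
  have h2 := max0_comb (u := preact n (jdx n m + 1) x) (v := preact n (jdx n m + 1) y) ha hb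
  have heps : a*ε + b*ε = ε := by linear_combination ε * hab
  linarith [mul_le_mul_of_nonneg_left hx ha, mul_le_mul_of_nonneg_left hy hb, h1, h2, heps]

lemma preact_continuous (n : ℕ) (k : Fin (2*n+2)) : Continuous (preact n k) := by
  unfold preact
  exact ((continuous_const.mul (by fun_prop : Continuous fun x : E2 => x 0)).add
    (continuous_const.mul (by fun_prop : Continuous fun x : E2 => x 1))).sub continuous_const

lemma cap_closed (n : ℕ) (ε r : ℝ) (m : Fin (n+1)) : IsClosed (cap n ε r m) := by
  apply IsClosed.inter ?_ Metric.isClosed_closedBall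
  apply isClosed_le continuous_const
  exact ((preact_continuous n _).sub
    (continuous_const.max (preact_continuous n _))).sub
    (continuous_const.max (preact_continuous n _))

def upt (n : ℕ) (ρ : ℝ) (m : Fin (n+1)) : E2 :=
  (WithLp.equiv 2 (Fin 2 → ℝ)).symm
    ![ρ * Real.sin (Real.pi*(2*((m:ℕ):ℝ)+1)/((n:ℝ)+1)),
      ρ * Real.cos (Real.pi*(2*((m:ℕ):ℝ)+1)/((n:ℝ)+1))]

lemma upt_norm (n : ℕ) {ρ : ℝ} (hρ : 0 ≤ ρ) (m : Fin (n+1)) : ‖upt n ρ m‖ = ρ := by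
  have hpyth := Real.sin_sq_add_cos_sq (Real.pi*(2*((m:ℕ):ℝ)+1)/((n:ℝ)+1))
  rw [EuclideanSpace.norm_eq]
  simp only [upt, WithLp.equiv_symm_apply, PiLp.toLp_apply, Fin.sum_univ_two, Matrix.cons_val_zero,
    Matrix.cons_val_one, Matrix.head_cons, Real.norm_eq_abs, sq_abs]
  rw [show (ρ * Real.sin (Real.pi*(2*((m:ℕ):ℝ)+1)/((n:ℝ)+1)))^2
      + (ρ * Real.cos (Real.pi*(2*((m:ℕ):ℝ)+1)/((n:ℝ)+1)))^2 = ρ^2 by nlinarith]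
  exact Real.sqrt_sq hρ

lemma preact_upt (n : ℕ) (ρ : ℝ) (m : Fin (n+1)) (k : Fin (2*n+2)) :
    preact n k (upt n ρ m) =
      ρ * Real.cos (Real.pi*(((k:ℕ):ℝ)+1)/((n:ℝ)+1) - Real.pi*(2*((m:ℕ):ℝ)+1)/((n:ℝ)+1)) - 1 := by
  simp only [preact, upt, WithLp.equiv_symm_apply, PiLp.toLp_apply, Matrix.cons_val_zero,
    Matrix.cons_val_one, Matrix.head_cons]
  rw [Real.cos_sub]
  ring

lemma jdx_val (n : ℕ) (m : Fin (n+1)) : ((jdx n m : Fin (2*n+2)) : ℕ) = 2*(m:ℕ) := rfl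

lemma jdx_even (n : ℕ) (m : Fin (n+1)) : ((jdx n m : Fin (2*n+2)) : ℕ) % 2 = 0 := by
  rw [jdx_val]; omega

lemma upt_mem_cap (n : ℕ) (hn : 2 ≤ n) {ε r : ℝ} (hε : 0 < ε) (hr : 1 + ε ≤ r)
    (hεc : (1+ε) * Real.cos (Real.pi/((n:ℝ)+1)) < 1) (m : Fin (n+1)) :
    upt n (1+ε) m ∈ cap n ε r m := by
  have hN : (0:ℝ) < (n:ℝ)+1 := by positivity
  constructor
  · have hP : preact n (jdx n m) (upt n (1+ε) m) = ε := by
      rw [preact_upt]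
      rw [show Real.pi*(((jdx n m : ℕ):ℝ)+1)/((n:ℝ)+1) - Real.pi*(2*((m:ℕ):ℝ)+1)/((n:ℝ)+1) = 0 by
        rw [jdx_val]; push_cast; ring]
      rw [Real.cos_zero]; ring
    have hL : preact n (jdx n m - 1) (upt n (1+ε) m) ≤ 0 := by
      rw [preact_upt]
      rcases val_pred_cases n (jdx n m) with ⟨hv, hge⟩|⟨hv, h0⟩
      · rw [jdx_val] at hv hge
        rw [show Real.pi*((((jdx n m - 1 : Fin (2*n+2)) : ℕ):ℝ)+1)/((n:ℝ)+1)
              - Real.pi*(2*((m:ℕ):ℝ)+1)/((n:ℝ)+1) = -(Real.pi/((n:ℝ)+1)) by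
          rw [hv, Nat.cast_sub (by omega)]
          push_cast
          field_simp
          ring]
        rw [Real.cos_neg]
        linarith
      · rw [jdx_val] at h0
        have hm0 : ((m:ℕ):ℝ) = 0 := by exact_mod_cast (by omega : (m:ℕ) = 0)
        rw [show Real.pi*((((jdx n m - 1 : Fin (2*n+2)) : ℕ):ℝ)+1)/((n:ℝ)+1)
              - Real.pi*(2*((m:ℕ):ℝ)+1)/((n:ℝ)+1)
            = 2*Real.pi - Real.pi/((n:ℝ)+1) by
          rw [hv, hm0]
          push_cast
          field_simp
          ring]
        rw [Real.cos_two_pi_sub]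
        linarith
    have hR : preact n (jdx n m + 1) (upt n (1+ε) m) ≤ 0 := by
      rw [preact_upt]
      rcases val_succ_cases n (jdx n m) with ⟨hv, hlt⟩|⟨hv, h0⟩
      · rw [jdx_val] at hv
        rw [show Real.pi*((((jdx n m + 1 : Fin (2*n+2)) : ℕ):ℝ)+1)/((n:ℝ)+1)
              - Real.pi*(2*((m:ℕ):ℝ)+1)/((n:ℝ)+1) = Real.pi/((n:ℝ)+1) by
          rw [hv]
          push_cast
          field_simp
          ring]
        linarith
      · rw [jdx_val] at h0
        exfalso
        omega
    simp only [mem_setOf_eq]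
    rw [hP, max_eq_left hL, max_eq_left hR]
    linarith
  · rw [mem_closedBall_zero_iff, upt_norm n (by linarith) m]
    exact hr

lemma cap_active (n : ℕ) {ε r : ℝ} (hε : 0 < ε) {m : Fin (n+1)} {x : E2}
    (hx : x ∈ cap n ε r m) : 0 < preact n (jdx n m) x := by
  have h1 : (0:ℝ) ≤ max 0 (preact n (jdx n m - 1) x) := le_max_left _ _
  have h2 : (0:ℝ) ≤ max 0 (preact n (jdx n m + 1) x) := le_max_left _ _
  have := hx.1
  simp only [mem_setOf_eq] at this
  linarith

lemma cap_subset_X (n : ℕ) (hc : 0 < Real.cos (Real.pi/((n:ℝ)+1))) {ε r : ℝ} (hε : 0 < ε)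
    (hr1 : 1 < r) (hrc : r * Real.cos (Real.pi/((n:ℝ)+1)) < 1) (m : Fin (n+1)) :
    cap n ε r m ⊆ netF n ⁻¹' Set.Iic (-ε) ∩ Metric.closedBall (0 : E2) r := by
  intro x hx
  refine ⟨?_, hx.2⟩
  have hb := ball_sq (by linarith) hx.2
  have hact := cap_active n hε hx
  have hout := inactive_outside n hc hr1 hrc hb hact
  have hf := formula_even n (n_ge n hc) x (jdx n m) (jdx_even n m) hout
  simp only [mem_preimage, mem_Iic]
  have hv := hx.1
  simp only [mem_setOf_eq] at hv
  rw [hf, max_eq_right hact.le]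
  linarith

lemma X_subset_caps (n : ℕ) (hc : 0 < Real.cos (Real.pi/((n:ℝ)+1))) {ε r : ℝ} (hε : 0 < ε)
    (hr1 : 1 < r) (hrc : r * Real.cos (Real.pi/((n:ℝ)+1)) < 1) {x : E2}
    (hx : x ∈ netF n ⁻¹' Set.Iic (-ε) ∩ Metric.closedBall (0 : E2) r) :
    ∃ m : Fin (n+1), x ∈ cap n ε r m := by
  obtain ⟨hx1, hx2⟩ := hx
  simp only [mem_preimage, mem_Iic] at hx1
  have hb := ball_sq (by linarith) hx2
  have hex : ∃ j : Fin (2*n+2), (j:ℕ) % 2 = 0 ∧ 0 < preact n j x := by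
    by_contra hcon
    push_neg at hcon
    have h0 : 0 ≤ netF n x := by
      rw [netF]
      apply Finset.sum_nonneg
      intro k _
      rcases Nat.even_or_odd (k:ℕ) with hp|hp
      · rw [sign_eval, if_pos (Nat.even_iff.mp hp), max_eq_left (hcon k (Nat.even_iff.mp hp))]
        norm_num
      · rw [Nat.odd_iff] at hp
        rw [sign_eval, if_neg (by omega), one_mul]
        exact le_max_left _ _
    linarith
  obtain ⟨j, hjp, hja⟩ := hex
  have hjlt := j.isLt
  refine ⟨⟨(j:ℕ)/2, by omega⟩, ?_, hx2⟩
  have hjm : jdx n ⟨(j:ℕ)/2, by omega⟩ = j := by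
    rw [Fin.ext_iff, jdx_val]
    simp only []
    omega
  rw [hjm]
  have hout := inactive_outside n hc hr1 hrc hb hja
  have hf := formula_even n (n_ge n hc) x j hjp hout
  simp only [mem_setOf_eq]
  rw [hf, max_eq_right hja.le] at hx1
  linarith

lemma caps_disjoint (n : ℕ) (hc : 0 < Real.cos (Real.pi/((n:ℝ)+1))) {ε r : ℝ} (hε : 0 < ε)
    (hr1 : 1 < r) (hrc : r * Real.cos (Real.pi/((n:ℝ)+1)) < 1) {m m' : Fin (n+1)}
    (hne : m ≠ m') {x : E2} (hx : x ∈ cap n ε r m) (hx' : x ∈ cap n ε r m') : False := by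
  have hb := ball_sq (by linarith) hx.2
  have h1 := cap_active n hε hx
  have h2 := cap_active n hε hx'
  have hnej : jdx n m ≠ jdx n m' := by
    simp only [ne_eq, Fin.ext_iff, jdx_val]
    simp only [ne_eq, Fin.ext_iff] at hne
    omega
  have hmlt := m.isLt
  have hmlt' := m'.isLt
  rcases adjacency n hc hr1 hrc hb hnej h1 h2 with h|h <;>
    (rw [jdx_val, jdx_val] at h; omega)

end LCE

open LCE

/-- The network vanishes identically on the central cell, and for a disc N(C) of
radius 1 < r < 1/cos(π/(n+1)) about the origin and all sufficiently small ε > 0,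
the sublevel set F_{≤−ε} ∩ N(C) has exactly n+1 connected components while
F_{≤ε} ∩ N(C) is connected. -/
theorem local_complexity_example (n : ℕ) :
    (∀ x ∈ centralCell n, netF n x = 0) ∧
    ∀ r : ℝ, 1 < r → r < 1 / Real.cos (Real.pi / (n + 1)) →
      ∃ ε₀ > (0 : ℝ), ∀ ε : ℝ, 0 < ε → ε < ε₀ →
        Nat.card (ConnectedComponents
            ↥(netF n ⁻¹' Set.Iic (-ε) ∩ Metric.closedBall (0 : E2) r)) = n + 1 ∧
        IsConnected (netF n ⁻¹' Set.Iic ε ∩ Metric.closedBall (0 : E2) r) := by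
  constructor
  · intro x hx
    rw [netF]
    apply Finset.sum_eq_zero
    intro k _
    rw [max_eq_left (hx k), mul_zero]
  · intro r hr1 hrr
    have hc : 0 < Real.cos (Real.pi / (n + 1)) := by
      by_contra h
      push_neg at h
      have : 1 / Real.cos (Real.pi / (n + 1)) ≤ 0 := one_div_nonpos.mpr h
      linarith
    have hrc : r * Real.cos (Real.pi / (n + 1)) < 1 := by
      rw [lt_div_iff₀ hc] at hrr
      linarith
    have hn2 : 2 ≤ n := LCE.n_ge n hc
    have hinv : 1 < 1 / Real.cos (Real.pi / (n + 1)) := lt_trans hr1 hrr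
    refine ⟨min (r-1) (1/Real.cos (Real.pi / (n + 1)) - 1),
      lt_min (by linarith) (by linarith), ?_⟩
    intro ε hε hεlt
    have hε1 : 1 + ε < r := by
      have := lt_of_lt_of_le hεlt (min_le_left _ _); linarith
    have hε2 : (1+ε) * Real.cos (Real.pi / (n + 1)) < 1 := by
      have h' := lt_of_lt_of_le hεlt (min_le_right _ _)
      have h'' : 1 + ε < 1 / Real.cos (Real.pi / (n + 1)) := by linarith
      rw [lt_div_iff₀ hc] at h''
      linarith
    constructor
    · -- component count
      have hmemcap : ∀ m : Fin (n+1), upt n (1+ε) m ∈ cap n ε r m :=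
        fun m => upt_mem_cap n hn2 hε (le_of_lt hε1) hε2 m
      have hptX : ∀ m : Fin (n+1),
          upt n (1+ε) m ∈ netF n ⁻¹' Set.Iic (-ε) ∩ Metric.closedBall (0:E2) r :=
        fun m => cap_subset_X n hc hε hr1 hrc m (hmemcap m)
      set X : Set E2 := netF n ⁻¹' Set.Iic (-ε) ∩ Metric.closedBall (0:E2) r with hX
      let f : Fin (n+1) → ConnectedComponents ↥X :=
        fun m => ConnectedComponents.mk ⟨upt n (1+ε) m, hptX m⟩
      have hclopen : ∀ m : Fin (n+1), IsClopen (Subtype.val ⁻¹' (cap n ε r m) : Set ↥X) := by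
        intro m
        refine ⟨(cap_closed n ε r m).preimage continuous_subtype_val, ?_⟩
        rw [← isClosed_compl_iff]
        have he : (Subtype.val ⁻¹' (cap n ε r m) : Set ↥X)ᶜ
            = Subtype.val ⁻¹' (⋃ m' ∈ ({m}ᶜ : Set (Fin (n+1))), cap n ε r m') := by
          ext y
          simp only [mem_compl_iff, mem_preimage, mem_iUnion, exists_prop,
            mem_singleton_iff]
          constructor
          · intro hy
            obtain ⟨m', hm'⟩ := X_subset_caps n hc hε hr1 hrc y.2
            exact ⟨m', fun heq => hy (heq ▸ hm'), hm'⟩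
          · rintro ⟨m', hne', hy'⟩ hy
            exact caps_disjoint n hc hε hr1 hrc (fun heq => hne' heq.symm) hy hy'
        rw [he]
        exact (Set.Finite.isClosed_biUnion (Set.toFinite _)
          (fun m' _ => cap_closed n ε r m')).preimage continuous_subtype_val
      have hinj : Function.Injective f := by
        intro m m' hf
        by_contra hne
        rw [ConnectedComponents.coe_eq_coe] at hf
        have h1 : (⟨upt n (1+ε) m', hptX m'⟩ : ↥X)
            ∈ connectedComponent (⟨upt n (1+ε) m, hptX m⟩ : ↥X) := by
          rw [hf]; exact mem_connectedComponent
        have h2 := (hclopen m).connectedComponent_subset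
          (show (⟨upt n (1+ε) m, hptX m⟩ : ↥X) ∈ Subtype.val ⁻¹' (cap n ε r m) from hmemcap m) h1
        exact caps_disjoint n hc hε hr1 hrc hne h2 (hmemcap m')
      have hsurj : Function.Surjective f := by
        intro comp
        obtain ⟨y, rfl⟩ := ConnectedComponents.surjective_coe comp
        obtain ⟨m, hm⟩ := X_subset_caps n hc hε hr1 hrc y.2
        refine ⟨m, ?_⟩
        show ConnectedComponents.mk _ = ConnectedComponents.mk y
        rw [ConnectedComponents.coe_eq_coe]
        apply connectedComponent_eq
        have hpre : cap n ε r m ⊆ connectedComponentIn X (upt n (1+ε) m) :=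
          IsPreconnected.subset_connectedComponentIn
            (cap_convex n ε r m).isPreconnected (hmemcap m) (cap_subset_X n hc hε hr1 hrc m)
        have hy := hpre hm
        rw [connectedComponentIn_eq_image (hptX m)] at hy
        obtain ⟨z, hz, hzy⟩ := hy
        rwa [show z = y from Subtype.ext hzy] at hz
      rw [show (n+1) = Nat.card (Fin (n+1)) by simp]
      exact (Nat.card_eq_of_bijective f ⟨hinj, hsurj⟩).symm
    · -- connectedness
      have h0Y : (0:E2) ∈ netF n ⁻¹' Set.Iic ε ∩ Metric.closedBall (0:E2) r := by
        constructor
        · simp only [mem_preimage, mem_Iic, netF_zero]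
          linarith
        · simp only [Metric.mem_closedBall, dist_self]
          linarith
      have hstar : ∀ y ∈ netF n ⁻¹' Set.Iic ε ∩ Metric.closedBall (0:E2) r, ∀ t:ℝ, 0 ≤ t → t ≤ 1 →
          t • y ∈ netF n ⁻¹' Set.Iic ε ∩ Metric.closedBall (0:E2) r := by
        intro y hy t ht0 ht1
        have hb := ball_sq (by linarith : (0:ℝ) ≤ r) hy.2
        constructor
        · simp only [mem_preimage, mem_Iic]
          have h1 := star_bound n hc hr1 hrc hb ht0 ht1
          have h2 : max 0 (netF n y) ≤ ε := max_le hε.le hy.1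
          linarith
        · have hy2 : ‖y‖ ≤ r := mem_closedBall_zero_iff.mp hy.2
          rw [mem_closedBall_zero_iff, norm_smul, Real.norm_eq_abs, abs_of_nonneg ht0]
          nlinarith [norm_nonneg y]
      have hU : netF n ⁻¹' Set.Iic ε ∩ Metric.closedBall (0:E2) r
          = ⋃₀ ((fun y => segment ℝ 0 y) ''
              (netF n ⁻¹' Set.Iic ε ∩ Metric.closedBall (0:E2) r)) := by
        ext z
        constructor
        · intro hz
          exact ⟨segment ℝ 0 z, ⟨z, hz, rfl⟩, right_mem_segment ℝ 0 z⟩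
        · rintro ⟨s, ⟨y, hy, rfl⟩, hz⟩
          change z ∈ segment ℝ 0 y at hz
          rw [segment_eq_image] at hz
          obtain ⟨t, ht, rfl⟩ := hz
          show (1-t) • (0:E2) + t • y ∈ _
          have he : (1-t) • (0:E2) + t • y = t • y := by simp
          rw [he]
          exact hstar y hy t ht.1 ht.2
      refine ⟨⟨0, h0Y⟩, ?_⟩
      rw [hU]
      exact isPreconnected_sUnion 0 _
        (by rintro s ⟨y, hy, rfl⟩; exact left_mem_segment ℝ 0 y)
        (by rintro s ⟨y, hy, rfl⟩; exact (convex_segment 0 y).isPreconnected)
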